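/- Let α be an algebraic integer of degree at least 2 over ℚ. Then neither R_α = {f ∈ ℚ[X] : f(α) ∈ ℤ[α]} nor S_α = {f ∈ ℚ[X] : f(α) ∈ O_{ℚ(α)}} is a Noetherian ring; in particular the ideal M_α = p_α(X)·ℚ[X] is not finitely generated as an ideal of S_α (respectively of R_α). -/

import Mathlib

open Polynomial

set_option synthInstance.maxHeartbeats 1000000
set_option maxHeartbeats 1000000

/-- The ring `R_α = {f ∈ ℚ[X] : f(α) ∈ ℤ[α]}` as a subalgebra of `ℚ[X]`. -/
noncomputable def RalphaP (α : AlgebraicClosure ℚ) : Subalgebra ℤ (Polynomial ℚ) where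
  carrier := {f | Polynomial.aeval α f ∈ Algebra.adjoin ℤ {α}}
  mul_mem' := by
    intro f g hf hg
    have hf' : Polynomial.aeval α f ∈ Algebra.adjoin ℤ ({α} : Set (AlgebraicClosure ℚ)) := hf
    have hg' : Polynomial.aeval α g ∈ Algebra.adjoin ℤ ({α} : Set (AlgebraicClosure ℚ)) := hg
    show Polynomial.aeval α (f * g) ∈ Algebra.adjoin ℤ ({α} : Set (AlgebraicClosure ℚ))
    simpa [map_mul] using mul_mem hf' hg'
  add_mem' := by
    intro f g hf hg
    have hf' : Polynomial.aeval α f ∈ Algebra.adjoin ℤ ({α} : Set (AlgebraicClosure ℚ)) := hf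
    have hg' : Polynomial.aeval α g ∈ Algebra.adjoin ℤ ({α} : Set (AlgebraicClosure ℚ)) := hg
    show Polynomial.aeval α (f + g) ∈ Algebra.adjoin ℤ ({α} : Set (AlgebraicClosure ℚ))
    simpa [map_add] using add_mem hf' hg'
  algebraMap_mem' := by
    intro r
    show Polynomial.aeval α (algebraMap ℤ (Polynomial ℚ) r) ∈
      Algebra.adjoin ℤ ({α} : Set (AlgebraicClosure ℚ))
    simpa using intCast_mem (Algebra.adjoin ℤ ({α} : Set (AlgebraicClosure ℚ))) r

/-- The ring `S_α = {f ∈ ℚ[X] : f(α) ∈ O_{ℚ(α)}}` as a subalgebra of `ℚ[X]`. -/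
noncomputable def SalphaP (α : AlgebraicClosure ℚ) : Subalgebra ℤ (Polynomial ℚ) where
  carrier := {f | IsIntegral ℤ (Polynomial.aeval α f)}
  mul_mem' := by
    intro f g hf hg
    have hf' : IsIntegral ℤ (Polynomial.aeval α f) := hf
    have hg' : IsIntegral ℤ (Polynomial.aeval α g) := hg
    show IsIntegral ℤ (Polynomial.aeval α (f * g))
    simpa [map_mul] using hf'.mul hg'
  add_mem' := by
    intro f g hf hg
    have hf' : IsIntegral ℤ (Polynomial.aeval α f) := hf
    have hg' : IsIntegral ℤ (Polynomial.aeval α g) := hg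
    show IsIntegral ℤ (Polynomial.aeval α (f + g))
    simpa [map_add] using hf'.add hg'
  algebraMap_mem' := by
    intro r
    show IsIntegral ℤ (Polynomial.aeval α (algebraMap ℤ (Polynomial ℚ) r))
    rw [eq_intCast (algebraMap ℤ (Polynomial ℚ)) r, map_intCast,
      ← eq_intCast (algebraMap ℤ (AlgebraicClosure ℚ)) r]
    exact isIntegral_algebraMap

/-- The ideal `M_α = p_α·ℚ[X]`, viewed as an ideal of `R_α`. -/
noncomputable def MalphaR (α : AlgebraicClosure ℚ) : Ideal ↥(RalphaP α) where
  carrier := {f | minpoly ℚ α ∣ (f : Polynomial ℚ)}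
  add_mem' := by
    intro f g hf hg
    have hf' : minpoly ℚ α ∣ (f : Polynomial ℚ) := hf
    have hg' : minpoly ℚ α ∣ (g : Polynomial ℚ) := hg
    show minpoly ℚ α ∣ ((f + g : ↥(RalphaP α)) : Polynomial ℚ)
    push_cast
    exact dvd_add hf' hg'
  zero_mem' := by
    show minpoly ℚ α ∣ ((0 : ↥(RalphaP α)) : Polynomial ℚ)
    push_cast
    exact dvd_zero _
  smul_mem' := by
    intro c f hf
    have hf' : minpoly ℚ α ∣ (f : Polynomial ℚ) := hf
    show minpoly ℚ α ∣ ((c • f : ↥(RalphaP α)) : Polynomial ℚ)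
    rw [smul_eq_mul]
    push_cast
    exact hf'.mul_left _

/-- The ideal `M_α = p_α·ℚ[X]`, viewed as an ideal of `S_α`. -/
noncomputable def MalphaS (α : AlgebraicClosure ℚ) : Ideal ↥(SalphaP α) where
  carrier := {f | minpoly ℚ α ∣ (f : Polynomial ℚ)}
  add_mem' := by
    intro f g hf hg
    have hf' : minpoly ℚ α ∣ (f : Polynomial ℚ) := hf
    have hg' : minpoly ℚ α ∣ (g : Polynomial ℚ) := hg
    show minpoly ℚ α ∣ ((f + g : ↥(SalphaP α)) : Polynomial ℚ)
    push_cast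
    exact dvd_add hf' hg'
  zero_mem' := by
    show minpoly ℚ α ∣ ((0 : ↥(SalphaP α)) : Polynomial ℚ)
    push_cast
    exact dvd_zero _
  smul_mem' := by
    intro c f hf
    have hf' : minpoly ℚ α ∣ (f : Polynomial ℚ) := hf
    show minpoly ℚ α ∣ ((c • f : ↥(SalphaP α)) : Polynomial ℚ)
    rw [smul_eq_mul]
    push_cast
    exact hf'.mul_left _

lemma core_not_fg (α : AlgebraicClosure ℚ) (hα : IsIntegral ℤ α)
    (T : Subalgebra ℤ (Polynomial ℚ))
    (hint : ∀ f : Polynomial ℚ, f ∈ T → IsIntegral ℤ (Polynomial.aeval α f))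
    (hmem : ∀ q : Polynomial ℚ, minpoly ℚ α * q ∈ T)
    (M : Ideal ↥T)
    (hM : ∀ f : ↥T, f ∈ M ↔ minpoly ℚ α ∣ (f : Polynomial ℚ)) : ¬ M.FG := by
  rintro ⟨s, hs⟩
  set p := minpoly ℚ α with hpdef
  have halgQ : IsIntegral ℚ α := hα.tower_top
  have hp0 : p ≠ 0 := minpoly.ne_zero halgQ
  -- the "quotient" polynomials, evaluated at α
  set c : ↥T → AlgebraicClosure ℚ :=
    fun b => Polynomial.aeval α ((b : Polynomial ℚ) / p) with hcdef
  have halg : ∀ x : AlgebraicClosure ℚ, IsAlgebraic ℤ x := fun x =>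
    (IsFractionRing.isAlgebraic_iff ℤ ℚ (AlgebraicClosure ℚ)).2
      ((AlgebraicClosure.isAlgebraic ℚ).isAlgebraic x)
  have hintcast : ∀ m : ℤ, IsIntegral ℤ ((m : AlgebraicClosure ℚ)) := by
    intro m
    have h : IsIntegral ℤ (algebraMap ℤ (AlgebraicClosure ℚ) m) := isIntegral_algebraMap
    simpa using h
  have hmul : ∀ b : ↥T, ∃ y : ℤ, y ≠ 0 ∧
      IsIntegral ℤ ((y : AlgebraicClosure ℚ) * c b) := by
    intro b
    obtain ⟨y, hy, hxy⟩ := (halg (c b)).exists_integral_multiple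
    refine ⟨y, hy, ?_⟩
    rwa [zsmul_eq_mul] at hxy
  choose N hN0 hNint using hmul
  set Nt : ℤ := ∏ b ∈ s, N b with hNtdef
  have hNt0 : Nt ≠ 0 := Finset.prod_ne_zero_iff.2 fun b _ => hN0 b
  -- key representation of arbitrary values of polynomials at α
  have key : ∀ q : Polynomial ℚ, ∃ a : ↥T → AlgebraicClosure ℚ,
      (∀ b ∈ s, IsIntegral ℤ (a b)) ∧
      Polynomial.aeval α q = ∑ b ∈ s, a b * c b := by
    intro q
    have hfM : (⟨p * q, hmem q⟩ : ↥T) ∈ M := (hM _).2 ⟨q, rfl⟩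
    rw [← hs, Ideal.span, Submodule.mem_span_finset] at hfM
    obtain ⟨h, -, hh⟩ := hfM
    have hcoe : ∑ b ∈ s, (h b : Polynomial ℚ) * (b : Polynomial ℚ) = p * q := by
      have := congrArg (fun z : ↥T => (z : Polynomial ℚ)) hh
      simpa [smul_eq_mul] using this
    have hb_eq : ∀ b : ↥T, b ∈ s → (b : Polynomial ℚ) = p * ((b : Polynomial ℚ) / p) := by
      intro b hb
      have hdvd : p ∣ (b : Polynomial ℚ) := (hM b).1 (hs ▸ Ideal.subset_span hb)
      exact (EuclideanDomain.mul_div_cancel' hp0 hdvd).symm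
    have hq : q = ∑ b ∈ s, (h b : Polynomial ℚ) * ((b : Polynomial ℚ) / p) := by
      apply mul_left_cancel₀ hp0
      rw [← hcoe, Finset.mul_sum]
      refine Finset.sum_congr rfl fun b hb => ?_
      conv_lhs => rw [hb_eq b hb]
      ring
    refine ⟨fun b => Polynomial.aeval α (h b : Polynomial ℚ),
      fun b _ => hint _ (h b).2, ?_⟩
    rw [hq, map_sum]
    simp [hcdef]
  -- apply with q = C (1/(2·Nt)) and derive a contradiction
  obtain ⟨a, haint, haeq⟩ := key (Polynomial.C ((1 : ℚ) / (2 * (Nt : ℚ))))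
  have hint2 : IsIntegral ℤ ((Nt : AlgebraicClosure ℚ) *
      Polynomial.aeval α (Polynomial.C ((1 : ℚ) / (2 * (Nt : ℚ))))) := by
    rw [haeq, Finset.mul_sum]
    refine IsIntegral.sum _ fun b hb => ?_
    have hsplit : (Nt : AlgebraicClosure ℚ) * (a b * c b)
        = a b * (((∏ x ∈ s.erase b, N x : ℤ) : AlgebraicClosure ℚ) *
          ((N b : AlgebraicClosure ℚ) * c b)) := by
      have hNt : Nt = N b * ∏ x ∈ s.erase b, N x := (Finset.mul_prod_erase s N hb).symm
      rw [hNt]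
      push_cast
      ring
    rw [hsplit]
    exact (haint b hb).mul ((hintcast _).mul (hNint b))
  have heval : (Nt : AlgebraicClosure ℚ) *
      Polynomial.aeval α (Polynomial.C ((1 : ℚ) / (2 * (Nt : ℚ))))
      = algebraMap ℚ (AlgebraicClosure ℚ) (1 / 2) := by
    rw [Polynomial.aeval_C]
    have : (Nt : AlgebraicClosure ℚ) = algebraMap ℚ (AlgebraicClosure ℚ) (Nt : ℚ) := by
      rw [eq_ratCast (algebraMap ℚ (AlgebraicClosure ℚ))]
      norm_cast
    rw [this, ← map_mul]
    congr 1
    have hNtQ : (Nt : ℚ) ≠ 0 := Int.cast_ne_zero.2 hNt0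
    field_simp
  rw [heval] at hint2
  have hhalf : IsIntegral ℤ ((1 : ℚ) / 2) :=
    (isIntegral_algebraMap_iff
      (algebraMap ℚ (AlgebraicClosure ℚ)).injective).1 hint2
  obtain ⟨y, hy⟩ := IsIntegrallyClosed.isIntegral_iff.1 hhalf
  have hy' : (2 * y : ℚ) = 1 := by
    rw [show ((y : ℤ) : ℚ) = algebraMap ℤ ℚ y by simp, hy]
    norm_num
  have : (2 * y : ℤ) = 1 := by exact_mod_cast hy'
  omega

/-- Let `α` be an algebraic integer of degree at least `2` over `ℚ`.
Then neither `R_α = {f ∈ ℚ[X] : f(α) ∈ ℤ[α]}` nor `S_α = {f ∈ ℚ[X] : f(α) ∈ O_{ℚ(α)}}`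
is a Noetherian ring; in particular the ideal `M_α = p_α·ℚ[X]` is not finitely generated
as an ideal of `S_α` (respectively of `R_α`). -/
theorem stmt_17 (α : AlgebraicClosure ℚ) (hα : IsIntegral ℤ α)
    (hdeg : 2 ≤ (minpoly ℚ α).natDegree) :
    ¬ IsNoetherianRing ↥(RalphaP α) ∧ ¬ IsNoetherianRing ↥(SalphaP α) ∧
      ¬ (MalphaS α).FG ∧ ¬ (MalphaR α).FG := by
  have hadj : Algebra.adjoin ℤ ({α} : Set (AlgebraicClosure ℚ)) ≤
      integralClosure ℤ (AlgebraicClosure ℚ) :=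
    Algebra.adjoin_le (Set.singleton_subset_iff.2 hα)
  have hS : ¬ (MalphaS α).FG := by
    refine core_not_fg α hα (SalphaP α) (fun f hf => hf) (fun q => ?_) (MalphaS α)
      (fun f => Iff.rfl)
    show IsIntegral ℤ (Polynomial.aeval α (minpoly ℚ α * q))
    rw [map_mul, minpoly.aeval, zero_mul]
    exact isIntegral_zero
  have hR : ¬ (MalphaR α).FG := by
    refine core_not_fg α hα (RalphaP α) (fun f hf => hadj hf) (fun q => ?_) (MalphaR α)
      (fun f => Iff.rfl)
    show Polynomial.aeval α (minpoly ℚ α * q) ∈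
      Algebra.adjoin ℤ ({α} : Set (AlgebraicClosure ℚ))
    rw [map_mul, minpoly.aeval, zero_mul]
    exact zero_mem _
  exact ⟨fun hN => hR ((isNoetherianRing_iff_ideal_fg _).1 hN _),
    fun hN => hS ((isNoetherianRing_iff_ideal_fg _).1 hN _), hS, hR⟩
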